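/- Let α_i > 0 (i = 1,…,s) and β > 0, let ℳ = {M_0, M_1, M_2} be (n+m) × (n+m) matrices with T_ℳ well-defined, and let {v^k} be generated by v^{k+1} = T_ℳ(v^k, v^{k−1}) from v^0, v^1. If ℳ satisfies Condition-M, then with H := M_0 + M_2 and v̄_K := (1/K)∑_{k=2}^{K+1} v^k, for every K ≥ 1 and every v ∈ ℝ^{n+m}: G(v̄_K, v) ≤ ( (3/4)‖v^1 − v‖_H² + (1/2)‖v^1 − v^0‖_H² ) / K. -/

import Mathlib

open Matrix Filter Topology

noncomputable section

/-- Spectral norm (largest singular value) of a real matrix. -/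
def specNorm {p q : Type*} [Fintype p] [Fintype q] [DecidableEq q]
    (M : Matrix p q ℝ) : ℝ :=
  ‖LinearMap.toContinuousLinearMap (Matrix.toEuclideanLin M)‖

/-- The square root of a positive semidefinite matrix, as `Matrix.PosSemidef.sqrt` was defined
in the older Mathlib: `U * diagonal (√ ∘ eigenvalues) * star U`. -/
def psdSqrt {d : Type*} [Fintype d] [DecidableEq d] {A : Matrix d d ℝ} (hA : A.PosSemidef) :
    Matrix d d ℝ :=
  hA.1.eigenvectorUnitary.1 * diagonal ((↑) ∘ (√·) ∘ hA.1.eigenvalues) *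
    (star hA.1.eigenvectorUnitary : Matrix d d ℝ)

/-- Condition-M for a triple of matrices: `M0 = M1 + M2`, `H := M0 + M2` is symmetric
positive definite, and `‖H^{-1/2} M2 H^{-1/2}‖₂ < 1/2` (here `H^{-1/2}` is the positive
semidefinite square root of `H⁻¹`). -/
def ConditionM {d : Type*} [Fintype d] [DecidableEq d] (M0 M1 M2 : Matrix d d ℝ) : Prop :=
  M0 = M1 + M2 ∧ ∃ hH : (M0 + M2).PosDef,
    specNorm (psdSqrt hH.inv.posSemidef * M2 * psdSqrt hH.inv.posSemidef) < 1 / 2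

/-- The cost functional defining the proximity operator `prox_{φ,H}` at input `x`. -/
def proxCost {ι : Type*} [Fintype ι] (φ : (ι → ℝ) → EReal) (H : Matrix ι ι ℝ)
    (x u : ι → ℝ) : EReal :=
  ((((1 : ℝ) / 2) * ((u - x) ⬝ᵥ H.mulVec (u - x)) : ℝ) : EReal) + φ u

/-- `p = prox_{φ,H}(x)`: `p` is the unique minimizer of the prox cost. -/
def IsProx {ι : Type*} [Fintype ι] (φ : (ι → ℝ) → EReal) (H : Matrix ι ι ℝ)
    (x p : ι → ℝ) : Prop :=
  (∀ u, proxCost φ H x p ≤ proxCost φ H x u) ∧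
  ∀ q, (∀ u, proxCost φ H x q ≤ proxCost φ H x u) → q = p

/-- Proper lower semicontinuous convex extended-real-valued function. -/
def ProperConvexLsc {ι : Type*} [Fintype ι] (f : (ι → ℝ) → EReal) : Prop :=
  (∃ x, f x ≠ ⊤) ∧ (∀ x, f x ≠ ⊥) ∧ LowerSemicontinuous f ∧
  ∀ x y : ι → ℝ, ∀ t : ℝ, 0 < t → t < 1 →
    f (t • x + (1 - t) • y) ≤ (t : EReal) * f x + ((1 - t : ℝ) : EReal) * f y

/-- Scaling of an extended-real-valued function by a real constant. -/
def smulF {V : Type*} (c : ℝ) (φ : V → EReal) : V → EReal := fun u => (c : EReal) * φ u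

/-- The conjugate of the indicator of `C = {b}`: `ι_C*(y) = ⟨y, b⟩`. -/
def iotaCstar {m : ℕ} (b : Fin m → ℝ) : (Fin m → ℝ) → EReal :=
  fun y => ((y ⬝ᵥ b : ℝ) : EReal)

variable {s m : ℕ} {n : Fin s → ℕ}

/-- Index type for the concatenated variable `x = (x_1, …, x_s)`. -/
abbrev XIdx (n : Fin s → ℕ) := (i : Fin s) × Fin (n i)

/-- Index type for the full variable `v = (x, y)`. -/
abbrev FIdx (n : Fin s → ℕ) (m : ℕ) := XIdx n ⊕ Fin m

/-- The `i`-th block of a concatenated vector. -/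
def blk (x : XIdx n → ℝ) (i : Fin s) : Fin (n i) → ℝ := fun j => x ⟨i, j⟩

/-- The matrix `A = [A_1 … A_s]`. -/
def bigA (A : ∀ i : Fin s, Matrix (Fin m) (Fin (n i)) ℝ) : Matrix (Fin m) (XIdx n) ℝ :=
  Matrix.of fun r p => A p.1 r p.2

/-- The separable objective `∑ f_i(x_i)`. -/
def objSum (f : ∀ i : Fin s, (Fin (n i) → ℝ) → EReal) (x : XIdx n → ℝ) : EReal :=
  ∑ i, f i (blk x i)

/-- `∑ A_i x_i`. -/
def sumAx (A : ∀ i : Fin s, Matrix (Fin m) (Fin (n i)) ℝ) (x : XIdx n → ℝ) : Fin m → ℝ :=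
  ∑ i, (A i).mulVec (blk x i)

/-- `x` is a solution of problem (P). -/
def IsSolution (f : ∀ i : Fin s, (Fin (n i) → ℝ) → EReal)
    (A : ∀ i : Fin s, Matrix (Fin m) (Fin (n i)) ℝ) (b : Fin m → ℝ)
    (x : XIdx n → ℝ) : Prop :=
  sumAx A x = b ∧ ∀ z : XIdx n → ℝ, sumAx A z = b → objSum f x ≤ objSum f z

/-- `b ∈ A(ri(dom(∑ f_i)))` where `ri` is the relative (intrinsic) interior. -/
def RiCond (f : ∀ i : Fin s, (Fin (n i) → ℝ) → EReal)
    (A : ∀ i : Fin s, Matrix (Fin m) (Fin (n i)) ℝ) (b : Fin m → ℝ) : Prop :=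
  b ∈ (fun x => sumAx A x) '' intrinsicInterior ℝ {x : XIdx n → ℝ | objSum f x ≠ ⊤}

/-- The `x`-part of a full vector. -/
def xpart (v : FIdx n m → ℝ) : XIdx n → ℝ := fun p => v (Sum.inl p)

/-- The `y`-part of a full vector. -/
def ypart (v : FIdx n m → ℝ) : Fin m → ℝ := fun r => v (Sum.inr r)

/-- The function `Φ(x_1,…,x_s,y) = ∑ f_i(x_i) + ι_C*(y)`. -/
def PhiFun (f : ∀ i : Fin s, (Fin (n i) → ℝ) → EReal) (b : Fin m → ℝ)
    (v : FIdx n m → ℝ) : EReal :=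
  objSum f (xpart v) + iotaCstar b (ypart v)

/-- The diagonal matrix `R = diag((β/α_1)I, …, (β/α_s)I, (1/β)I)`. -/
def Rmat (α : Fin s → ℝ) (β : ℝ) : Matrix (FIdx n m) (FIdx n m) ℝ :=
  Matrix.diagonal (Sum.elim (fun p : XIdx n => β / α p.1) fun _ => 1 / β)

/-- The inverse `R⁻¹` of the diagonal matrix `R`. -/
def Rinv (α : Fin s → ℝ) (β : ℝ) : Matrix (FIdx n m) (FIdx n m) ℝ :=
  Matrix.diagonal (Sum.elim (fun p : XIdx n => α p.1 / β) fun _ => β)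

/-- The expansive matrix `E = [[I, −P⁻¹Aᵀ],[βA, I]]`. -/
def Emat (A : ∀ i : Fin s, Matrix (Fin m) (Fin (n i)) ℝ) (α : Fin s → ℝ) (β : ℝ) :
    Matrix (FIdx n m) (FIdx n m) ℝ :=
  Matrix.fromBlocks 1 (-(Matrix.diagonal (fun p : XIdx n => α p.1 / β) * (bigA A)ᵀ))
    (β • bigA A) 1

/-- The skew-symmetric matrix `S_A = [[0, −Aᵀ],[A, 0]]`. -/
def SAmat (A : ∀ i : Fin s, Matrix (Fin m) (Fin (n i)) ℝ) :
    Matrix (FIdx n m) (FIdx n m) ℝ :=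
  Matrix.fromBlocks 0 (-(bigA A)ᵀ) (bigA A) 0

/-- `w = 𝒯(v)`, where `𝒯(x_1,…,x_s,y) = (prox_{(α_1/β)f_1}x_1, …, prox_{(α_s/β)f_s}x_s,
prox_{β ι_C*}y)`. -/
def isT (f : ∀ i : Fin s, (Fin (n i) → ℝ) → EReal) (b : Fin m → ℝ)
    (α : Fin s → ℝ) (β : ℝ) (v w : FIdx n m → ℝ) : Prop :=
  (∀ i, IsProx (smulF (α i / β) (f i)) 1 (blk (xpart v) i) (blk (xpart w) i)) ∧
  IsProx (smulF β (iotaCstar b)) 1 (ypart v) (ypart w)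

/-- `w = T_ℳ(u₁, u₂)`, i.e. `w = 𝒯((E − R⁻¹M₀)w + R⁻¹M₁u₁ + R⁻¹M₂u₂)`. -/
def isTM (f : ∀ i : Fin s, (Fin (n i) → ℝ) → EReal)
    (A : ∀ i : Fin s, Matrix (Fin m) (Fin (n i)) ℝ) (b : Fin m → ℝ)
    (α : Fin s → ℝ) (β : ℝ) (M0 M1 M2 : Matrix (FIdx n m) (FIdx n m) ℝ)
    (u1 u2 w : FIdx n m → ℝ) : Prop :=
  isT f b α β ((Emat A α β - Rinv α β * M0).mulVec w + (Rinv α β * M1).mulVec u1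
    + (Rinv α β * M2).mulVec u2) w

/-- `T_ℳ` is well-defined. -/
def TMWellDefined (f : ∀ i : Fin s, (Fin (n i) → ℝ) → EReal)
    (A : ∀ i : Fin s, Matrix (Fin m) (Fin (n i)) ℝ) (b : Fin m → ℝ)
    (α : Fin s → ℝ) (β : ℝ) (M0 M1 M2 : Matrix (FIdx n m) (FIdx n m) ℝ) : Prop :=
  ∀ u1 u2 : FIdx n m → ℝ, ∃! w, isTM f A b α β M0 M1 M2 u1 u2 w


/-- `G(v, v') := Φ(v) − Φ(v') + ⟨v', S_A v⟩`, valued in the extended reals. -/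
def Gfun {s m : ℕ} {n : Fin s → ℕ} (f : ∀ i : Fin s, (Fin (n i) → ℝ) → EReal)
    (A : ∀ i : Fin s, Matrix (Fin m) (Fin (n i)) ℝ) (b : Fin m → ℝ)
    (v v' : FIdx n m → ℝ) : EReal :=
  PhiFun f b v - PhiFun f b v' + ((v' ⬝ᵥ (SAmat A).mulVec v : ℝ) : EReal)

section Aux

private lemma limit_step (C D : ℝ) (hD : 0 ≤ D)
    (h : ∀ t : ℝ, 0 < t → t < 1 → 0 ≤ C + t * D) : 0 ≤ C := by
  by_contra hC
  push_neg at hC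
  set t : ℝ := min (1/2) ((-C)/(D+1)) with ht
  have htpos : 0 < t := lt_min (by norm_num) (div_pos (by linarith) (by linarith))
  have ht1 : t < 1 := lt_of_le_of_lt (min_le_left _ _) (by norm_num)
  have h2 : t ≤ (-C)/(D+1) := min_le_right _ _
  have h3 : t * (D+1) ≤ -C := by
    rw [← le_div_iff₀ (by linarith : (0:ℝ) < D + 1)]; exact h2
  have h4 := h t htpos ht1
  nlinarith
 
private lemma dot_self_nonneg {ι : Type*} [Fintype ι] (x : ι → ℝ) : 0 ≤ x ⬝ᵥ x :=
  Finset.sum_nonneg fun i _ => mul_self_nonneg _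

private lemma ecoe_sum {ι : Type*} (s : Finset ι) (r : ι → ℝ) :
    ((∑ i ∈ s, r i : ℝ) : EReal) = ∑ i ∈ s, ((r i : ℝ) : EReal) := by
  induction s using Finset.cons_induction with
  | empty => simp
  | cons a s ha ih => rw [Finset.sum_cons, Finset.sum_cons, ← ih, EReal.coe_add]

private lemma prox_vi {ι : Type*} [Fintype ι] [DecidableEq ι] {f : (ι → ℝ) → EReal}
    (hf : ProperConvexLsc f) {c : ℝ} (hc : 0 < c) {x p : ι → ℝ}
    (hp : ∀ u, proxCost (smulF c f) 1 x p ≤ proxCost (smulF c f) 1 x u) :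
    f p ≠ ⊤ ∧ ∀ u : ι → ℝ, f u ≠ ⊤ →
      0 ≤ (p - x) ⬝ᵥ (u - p) + c * ((f u).toReal - (f p).toReal) := by
  obtain ⟨⟨u0, hu0⟩, hbot, _, hconv⟩ := hf
  have hcost : ∀ u, proxCost (smulF c f) 1 x u
      = ((((1:ℝ)/2) * ((u - x) ⬝ᵥ (u - x)) : ℝ) : EReal) + (c : EReal) * f u := by
    intro u; simp [proxCost, smulF, Matrix.one_mulVec]
  have hfpt : f p ≠ ⊤ := by
    intro htop
    have h1 := hp u0
    rw [hcost, hcost, htop, EReal.coe_mul_top_of_pos hc, EReal.coe_add_top _,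
      ← EReal.coe_toReal (hu0) (hbot u0), ← EReal.coe_mul, ← EReal.coe_add] at h1
    exact (EReal.coe_lt_top _).not_ge h1
  refine ⟨hfpt, fun u hu => ?_⟩
  set rp := (f p).toReal with hrp
  set ru := (f u).toReal with hru
  have hfp : f p = (rp : EReal) := (EReal.coe_toReal hfpt (hbot p)).symm
  have hfu : f u = (ru : EReal) := (EReal.coe_toReal hu (hbot u)).symm
  apply limit_step _ ((1/2) * ((u - p) ⬝ᵥ (u - p)))
    (by have := dot_self_nonneg (u - p); linarith)
  intro t ht0 ht1
  have hcv := hconv u p t ht0 ht1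
  rw [hfu, hfp, ← EReal.coe_mul, ← EReal.coe_mul, ← EReal.coe_add] at hcv
  have hmin := hp (t • u + (1 - t) • p)
  rw [hcost, hcost, hfp, ← EReal.coe_mul, ← EReal.coe_add] at hmin
  have hmul : (c : EReal) * f (t • u + (1 - t) • p)
      ≤ (c : EReal) * ((t * ru + (1 - t) * rp : ℝ) : EReal) :=
    mul_le_mul_of_nonneg_left hcv (by exact_mod_cast hc.le)
  have hmin2 := hmin.trans (add_le_add_right hmul _)
  rw [← EReal.coe_mul, ← EReal.coe_add, EReal.coe_le_coe_iff] at hmin2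
  have hvec : t • u + (1 - t) • p - x = (p - x) + t • (u - p) := by
    ext j; simp [Pi.smul_apply, smul_eq_mul]; ring
  have hexp : (t • u + (1 - t) • p - x) ⬝ᵥ (t • u + (1 - t) • p - x)
      = (p - x) ⬝ᵥ (p - x) + 2 * t * ((p - x) ⬝ᵥ (u - p))
        + t ^ 2 * ((u - p) ⬝ᵥ (u - p)) := by
    rw [hvec]
    simp only [sub_dotProduct, dotProduct_sub, add_dotProduct, dotProduct_add,
      smul_dotProduct, dotProduct_smul, smul_eq_mul]
    simp only [dotProduct_comm u p, dotProduct_comm u x, dotProduct_comm x p]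
    ring
  rw [hexp] at hmin2
  have goal' : 0 ≤ t * ((p - x) ⬝ᵥ (u - p) + c * (ru - rp)
      + t * (1/2 * ((u - p) ⬝ᵥ (u - p)))) := by nlinarith
  have hX := (mul_nonneg_iff_of_pos_left ht0).mp goal'
  linarith

end Aux
section Aux2

private lemma iota_proper {m : ℕ} (b : Fin m → ℝ) : ProperConvexLsc (iotaCstar b) := by
  refine ⟨⟨0, by simp [iotaCstar]⟩, fun x => by simp [iotaCstar], ?_, ?_⟩
  · have hc : Continuous fun y : Fin m → ℝ => ((y ⬝ᵥ b : ℝ) : EReal) := by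
      refine continuous_coe_real_ereal.comp ?_
      exact continuous_finset_sum _ fun i _ => (continuous_apply i).mul continuous_const
    exact hc.lowerSemicontinuous
  · intro x y t ht0 ht1
    simp only [iotaCstar, add_dotProduct, smul_dotProduct, smul_eq_mul,
      ← EReal.coe_mul, ← EReal.coe_add]
    exact le_of_eq (by norm_cast)

private lemma jensen_finset {ι : Type*} [Fintype ι] {f : (ι → ℝ) → EReal}
    (hf : ProperConvexLsc f) :
    ∀ (t : Finset ℕ), t.Nonempty → ∀ (g : ℕ → ι → ℝ), (∀ k ∈ t, f (g k) ≠ ⊤) →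
      f (((t.card : ℝ))⁻¹ • ∑ k ∈ t, g k)
        ≤ ((((t.card : ℝ))⁻¹ * ∑ k ∈ t, (f (g k)).toReal : ℝ) : EReal) := by
  obtain ⟨-, hbot, -, hconv⟩ := hf
  intro t ht
  induction ht using Finset.Nonempty.cons_induction with
  | singleton a =>
    intro g hg
    simp only [Finset.card_singleton, Nat.cast_one, inv_one, Finset.sum_singleton, one_smul,
      one_mul]
    exact le_of_eq (EReal.coe_toReal (hg a (Finset.mem_singleton_self a)) (hbot _)).symm
  | cons a s ha hs ih =>
    intro g hg
    have hN : (0:ℝ) < (s.card : ℝ) := by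
      have := Finset.Nonempty.card_pos hs
      exact_mod_cast this
    set N : ℝ := (s.card : ℝ)
    set tt : ℝ := 1 / (N + 1)
    have ht0 : 0 < tt := by positivity
    have ht1 : tt < 1 := by
      rw [div_lt_one (by linarith)]; linarith
    have hcard : ((Finset.cons a s ha).card : ℝ) = N + 1 := by
      rw [Finset.card_cons]; push_cast [N]; ring
    have hsum : (((Finset.cons a s ha).card : ℝ))⁻¹ • ∑ k ∈ Finset.cons a s ha, g k
        = tt • g a + (1 - tt) • (N⁻¹ • ∑ k ∈ s, g k) := by
      rw [hcard, Finset.sum_cons]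
      ext j
      simp only [Pi.smul_apply, Pi.add_apply, Finset.sum_apply, smul_eq_mul, tt]
      field_simp
      ring
    have hga := hg a (Finset.mem_cons_self a s)
    set ra : ℝ := (f (g a)).toReal with hra
    have hfa : f (g a) = ((ra : ℝ) : EReal) :=
      (EReal.coe_toReal hga (hbot _)).symm
    have hIH := ih g (fun k hk => hg k (Finset.mem_cons_of_mem hk))
    have hcv := hconv (g a) (N⁻¹ • ∑ k ∈ s, g k) tt ht0 ht1
    rw [hsum]
    refine hcv.trans ?_
    have h1 : (tt : EReal) * f (g a) = ((tt * ra : ℝ) : EReal) := by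
      rw [hfa, ← EReal.coe_mul]
    have h2 : ((1 - tt : ℝ) : EReal) * f (N⁻¹ • ∑ k ∈ s, g k)
        ≤ (((1 - tt) * (N⁻¹ * ∑ k ∈ s, (f (g k)).toReal) : ℝ) : EReal) := by
      rw [EReal.coe_mul]
      exact mul_le_mul_of_nonneg_left hIH (by exact_mod_cast (by linarith : (0:ℝ) ≤ 1 - tt))
    rw [h1]
    refine (add_le_add_right h2 _).trans_eq ?_
    rw [← EReal.coe_add, EReal.coe_eq_coe_iff, Finset.sum_cons, hcard]
    have hNe : N + 1 ≠ 0 := by linarith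
    simp only [tt, ← hra]
    field_simp
    ring

end Aux2
section Aux3

variable {s m : ℕ} {n : Fin s → ℕ}

private lemma RRinv_eq_one (α : Fin s → ℝ) (β : ℝ) (hα : ∀ i, 0 < α i) (hβ : 0 < β) :
    Rmat (n := n) (m := m) α β * Rinv α β = 1 := by
  rw [Rmat, Rinv, Matrix.diagonal_mul_diagonal]
  have h : (fun i => (Sum.elim (fun p : XIdx n => β / α p.1) fun _ : Fin m => 1/β) i
      * (Sum.elim (fun p : XIdx n => α p.1 / β) fun _ : Fin m => β) i) = fun _ => (1:ℝ) := by
    funext x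
    rcases x with p | r
    · have h1 := (hα p.1).ne'
      have h2 := hβ.ne'
      simp only [Sum.elim_inl]
      field_simp
    · have h2 := hβ.ne'
      simp only [Sum.elim_inr]
      field_simp
  rw [h, Matrix.diagonal_one]

private lemma REmI (A : ∀ i : Fin s, Matrix (Fin m) (Fin (n i)) ℝ)
    (α : Fin s → ℝ) (β : ℝ) (hα : ∀ i, 0 < α i) (hβ : 0 < β) :
    Rmat (n := n) (m := m) α β * (Emat A α β - 1) = SAmat A := by
  ext i j
  rw [Rmat, Matrix.diagonal_mul, Matrix.sub_apply]
  rcases i with p | q <;> rcases j with p' | q'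
  · simp [Emat, SAmat, Matrix.one_apply]
  · have h1 := (hα p.1).ne'
    have h2 := hβ.ne'
    simp [Emat, SAmat, Matrix.one_apply, Matrix.diagonal_mul]
    field_simp
  · have h2 := hβ.ne'
    simp [Emat, SAmat, Matrix.one_apply]
    field_simp
  · simp [Emat, SAmat, Matrix.one_apply]

end Aux3

section Aux4

variable {s m : ℕ} {n : Fin s → ℕ}

private lemma Rz_identity (A : ∀ i : Fin s, Matrix (Fin m) (Fin (n i)) ℝ)
    (α : Fin s → ℝ) (β : ℝ) (hα : ∀ i, 0 < α i) (hβ : 0 < β)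
    (M0 M1 M2 : Matrix (FIdx n m) (FIdx n m) ℝ) (hM0 : M0 = M1 + M2)
    (w u1 u2 : FIdx n m → ℝ) :
    Rmat α β *ᵥ (((Emat A α β - Rinv α β * M0) *ᵥ w + (Rinv α β * M1) *ᵥ u1
        + (Rinv α β * M2) *ᵥ u2) - w)
      = SAmat A *ᵥ w + M1 *ᵥ (u1 - w) + M2 *ᵥ (u2 - w) := by
  have hRR := RRinv_eq_one (n := n) (m := m) α β hα hβ
  have hRE := REmI A α β hα hβ
  have hcan : ∀ M : Matrix (FIdx n m) (FIdx n m) ℝ, ∀ x,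
      Rmat α β *ᵥ ((Rinv α β * M) *ᵥ x) = M *ᵥ x := by
    intro M x
    rw [Matrix.mulVec_mulVec, ← Matrix.mul_assoc, hRR, Matrix.one_mul]
  have hSE : Rmat (n := n) (m := m) α β *ᵥ (Emat A α β *ᵥ w) - Rmat α β *ᵥ w
      = SAmat A *ᵥ w := by
    rw [Matrix.mulVec_mulVec, ← hRE, Matrix.mul_sub, Matrix.mul_one, Matrix.sub_mulVec]
  simp only [Matrix.mulVec_sub, Matrix.mulVec_add, Matrix.sub_mulVec, hcan, hM0,
    Matrix.add_mulVec]
  linear_combination hSE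

private lemma skew_zero (A : ∀ i : Fin s, Matrix (Fin m) (Fin (n i)) ℝ)
    (w : FIdx n m → ℝ) : w ⬝ᵥ SAmat A *ᵥ w = 0 := by
  have hT : (SAmat A)ᵀ = -SAmat A := by
    rw [SAmat, Matrix.fromBlocks_transpose]
    simp [Matrix.fromBlocks_neg]
  have h : w ⬝ᵥ SAmat A *ᵥ w = -(w ⬝ᵥ SAmat A *ᵥ w) := by
    nth_rewrite 1 [dotProduct_mulVec]
    rw [← Matrix.mulVec_transpose, hT, Matrix.neg_mulVec, neg_dotProduct,
      dotProduct_comm]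
  linarith

private lemma dot_split (α : Fin s → ℝ) (β : ℝ) (z u : FIdx n m → ℝ) :
    u ⬝ᵥ (Rmat (n := n) (m := m) α β) *ᵥ z
      = ∑ i, (β / α i) * (blk (xpart z) i ⬝ᵥ blk (xpart u) i)
        + (1/β) * (ypart z ⬝ᵥ ypart u) := by
  simp only [dotProduct, Rmat, Matrix.mulVec_diagonal]
  rw [Fintype.sum_sum_type]
  congr 1
  · rw [← Finset.univ_sigma_univ, Finset.sum_sigma]
    refine Finset.sum_congr rfl fun i _ => ?_
    rw [Finset.mul_sum]
    refine Finset.sum_congr rfl fun j _ => ?_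
    simp [blk, xpart]
    ring
  · rw [Finset.mul_sum]
    refine Finset.sum_congr rfl fun r _ => ?_
    simp [ypart]
    ring

end Aux4
section Aux5

private lemma psdSqrt_transpose {d : Type*} [Fintype d] [DecidableEq d] {A : Matrix d d ℝ}
    (hA : A.PosSemidef) : (psdSqrt hA)ᵀ = psdSqrt hA := by
  unfold psdSqrt
  rw [← conjTranspose_eq_transpose_of_trivial, conjTranspose_mul, conjTranspose_mul,
    diagonal_conjTranspose]
  simp [Matrix.mul_assoc, Matrix.star_eq_conjTranspose, conjTranspose_eq_transpose_of_trivial]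

private lemma psdSqrt_mul_self {d : Type*} [Fintype d] [DecidableEq d] {A : Matrix d d ℝ}
    (hA : A.PosSemidef) : psdSqrt hA * psdSqrt hA = A := by
  unfold psdSqrt
  conv_rhs => rw [hA.1.spectral_theorem, Unitary.conjStarAlgAut_apply]
  have hu : (star hA.1.eigenvectorUnitary : Matrix d d ℝ) * hA.1.eigenvectorUnitary.1 = 1 := by
    simp
  calc _ = hA.1.eigenvectorUnitary.1 * (diagonal ((↑) ∘ (√·) ∘ hA.1.eigenvalues)
        * ((star hA.1.eigenvectorUnitary : Matrix d d ℝ) * hA.1.eigenvectorUnitary.1)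
        * diagonal ((↑) ∘ (√·) ∘ hA.1.eigenvalues)) *
          (star hA.1.eigenvectorUnitary : Matrix d d ℝ) := by simp only [Matrix.mul_assoc]
    _ = _ := by
      rw [hu, Matrix.mul_one, diagonal_mul_diagonal]
      congr 3
      funext i
      simp [Real.mul_self_sqrt (hA.eigenvalues_nonneg i)]

open RealInnerProductSpace in
private lemma key_bound {d : Type*} [Fintype d] [DecidableEq d]
    {H M2 : Matrix d d ℝ} (hH : H.PosDef)
    (hs : specNorm (psdSqrt hH.inv.posSemidef * M2 * psdSqrt hH.inv.posSemidef) < 1/2) :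
    ∀ a c : d → ℝ, c ⬝ᵥ M2 *ᵥ a ≤ 1/4 * (a ⬝ᵥ H *ᵥ a + c ⬝ᵥ H *ᵥ c) := by
  set Q := psdSqrt hH.inv.posSemidef with hQdef
  have hQsym : Qᵀ = Q := psdSqrt_transpose _
  have hQ2 : Q * Q = H⁻¹ := psdSqrt_mul_self _
  have hdetH : IsUnit H.det := hH.det_pos.ne'.isUnit
  have hdetQ : IsUnit Q.det := by
    have hd : Q.det * Q.det = H⁻¹.det := by rw [← Matrix.det_mul, hQ2]
    have h2 : H⁻¹.det ≠ 0 := hH.inv.det_pos.ne'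
    have : Q.det ≠ 0 := fun h => h2 (by rw [← hd, h, mul_zero])
    exact this.isUnit
  have hQQinv : Q * Q⁻¹ = 1 := Matrix.mul_nonsing_inv _ hdetQ
  have hQHQ : Q * H * Q = 1 := by
    have hH' : H = Q⁻¹ * Q⁻¹ := by
      rw [← Matrix.mul_inv_rev, hQ2, Matrix.nonsing_inv_nonsing_inv _ hdetH]
    rw [hH']
    simp only [Matrix.mul_assoc]
    rw [Matrix.nonsing_inv_mul _ hdetQ, Matrix.mul_one, hQQinv]
  have key1 : ∀ (x y : d → ℝ) (M : Matrix d d ℝ),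
      (Q *ᵥ x) ⬝ᵥ M *ᵥ (Q *ᵥ y) = x ⬝ᵥ (Q * M * Q) *ᵥ y := by
    intro x y M
    rw [Matrix.mulVec_mulVec, Matrix.dotProduct_mulVec]
    have h1 : (Q *ᵥ x) ᵥ* (M * Q) = x ᵥ* (Q * M * Q) := by
      rw [show Q *ᵥ x = x ᵥ* Qᵀ from (Matrix.vecMul_transpose Q x).symm, hQsym,
        Matrix.vecMul_vecMul, Matrix.mul_assoc]
    rw [h1, ← Matrix.dotProduct_mulVec]
  intro a c
  set a' := Q⁻¹ *ᵥ a with ha'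
  set c' := Q⁻¹ *ᵥ c with hc'
  have ha : Q *ᵥ a' = a := by
    rw [ha', Matrix.mulVec_mulVec, hQQinv, Matrix.one_mulVec]
  have hc : Q *ᵥ c' = c := by
    rw [hc', Matrix.mulVec_mulVec, hQQinv, Matrix.one_mulVec]
  set N := Q * M2 * Q with hN
  have hdot1 : c ⬝ᵥ M2 *ᵥ a = c' ⬝ᵥ N *ᵥ a' := by rw [← ha, ← hc, key1]
  have hdotHa : a ⬝ᵥ H *ᵥ a = a' ⬝ᵥ a' := by
    rw [← ha, key1, hQHQ, Matrix.one_mulVec]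
  have hdotHc : c ⬝ᵥ H *ᵥ c = c' ⬝ᵥ c' := by
    rw [← hc, key1, hQHQ, Matrix.one_mulVec]
  set T := LinearMap.toContinuousLinearMap (Matrix.toEuclideanLin N) with hT
  set ea : EuclideanSpace ℝ d := (WithLp.equiv 2 (d → ℝ)).symm a' with h_ea
  set ec : EuclideanSpace ℝ d := (WithLp.equiv 2 (d → ℝ)).symm c' with h_ec
  have hTap : T ea = (WithLp.equiv 2 (d → ℝ)).symm (N *ᵥ a') := by
    rw [hT, h_ea]
    exact Matrix.toEuclideanLin_apply_piLp_toLp N a'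
  have hinner : ⟪ec, T ea⟫ = c' ⬝ᵥ N *ᵥ a' := by
    rw [hTap, h_ec]
    simp [PiLp.inner_apply, dotProduct]
    exact Finset.sum_congr rfl fun i _ => mul_comm _ _
  have hCS : ⟪ec, T ea⟫ ≤ ‖ec‖ * ‖T ea‖ := real_inner_le_norm _ _
  have hOp : ‖T ea‖ ≤ specNorm N * ‖ea‖ := T.le_opNorm ea
  have hna : ‖ea‖ ^ 2 = a' ⬝ᵥ a' := by
    rw [← real_inner_self_eq_norm_sq, h_ea]
    simp [PiLp.inner_apply, dotProduct]
    rw [EuclideanSpace.norm_sq_eq]; simp [sq]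
  have hnc : ‖ec‖ ^ 2 = c' ⬝ᵥ c' := by
    rw [← real_inner_self_eq_norm_sq, h_ec]
    simp [PiLp.inner_apply, dotProduct]
    rw [EuclideanSpace.norm_sq_eq]; simp [sq]
  have hspos : (0:ℝ) ≤ specNorm N := norm_nonneg _
  have hnorm_a : (0:ℝ) ≤ ‖ea‖ := norm_nonneg _
  have hnorm_c : (0:ℝ) ≤ ‖ec‖ := norm_nonneg _
  have hsN : specNorm N < 1/2 := hs
  rw [hdot1, hdotHa, hdotHc, ← hinner, ← hna, ← hnc]
  have h5 : ‖ec‖ * ‖T ea‖ ≤ ‖ec‖ * (specNorm N * ‖ea‖) :=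
    mul_le_mul_of_nonneg_left hOp hnorm_c
  nlinarith [sq_nonneg (‖ea‖ - ‖ec‖), mul_nonneg hnorm_a hnorm_c]

end Aux5
section Aux6

private lemma telescope_bound {d : Type*} [Fintype d] [DecidableEq d]
    (H M1 M2 : Matrix d d ℝ)
    (hM1 : M1 = H - M2 - M2)
    (hHsym : Hᵀ = H)
    (hpos : ∀ a : d → ℝ, 0 ≤ a ⬝ᵥ H *ᵥ a)
    (hkey : ∀ a c : d → ℝ, c ⬝ᵥ M2 *ᵥ a ≤ 1/4 * (a ⬝ᵥ H *ᵥ a + c ⬝ᵥ H *ᵥ c))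
    (v : ℕ → d → ℝ) (u : d → ℝ) (K : ℕ) :
    ∑ k ∈ Finset.range K,
        (v (k+2) - u) ⬝ᵥ (M1 *ᵥ (v (k+1) - v (k+2)) + M2 *ᵥ (v k - v (k+2)))
      ≤ 3/4 * ((v 1 - u) ⬝ᵥ H *ᵥ (v 1 - u))
        + 1/2 * ((v 1 - v 0) ⬝ᵥ H *ᵥ (v 1 - v 0)) := by
  have hsym : ∀ x y : d → ℝ, x ⬝ᵥ H *ᵥ y = y ⬝ᵥ H *ᵥ x := by
    intro x y
    rw [dotProduct_mulVec, ← Matrix.mulVec_transpose, hHsym, dotProduct_comm]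
  set dv : ℕ → d → ℝ := fun k => v (k+1) - v k with hdv
  set ev : ℕ → d → ℝ := fun k => v k - u with hev
  set Nf : (d → ℝ) → ℝ := fun a => a ⬝ᵥ H *ᵥ a with hNf
  set m2f : (d → ℝ) → (d → ℝ) → ℝ := fun a c => c ⬝ᵥ M2 *ᵥ a with hm2f
  have pti : ∀ k,
      (v (k+2) - u) ⬝ᵥ (M1 *ᵥ (v (k+1) - v (k+2)) + M2 *ᵥ (v k - v (k+2)))
      = (Nf (ev (k+1)) - Nf (ev (k+2)) - Nf (dv (k+1)))/2
        + m2f (dv (k+1)) (ev (k+2)) - m2f (dv k) (ev (k+1))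
        - m2f (dv k) (dv (k+1)) := by
    intro k
    simp only [hdv, hev, hNf, hm2f, hM1]
    simp only [Matrix.sub_mulVec, Matrix.mulVec_sub, dotProduct_sub, sub_dotProduct,
      Matrix.mulVec_add, dotProduct_add, add_dotProduct]
    ring_nf
    linarith [hsym (v k) (v (1+k)), hsym (v k) (v (2+k)), hsym (v k) u,
      hsym (v (1+k)) (v (2+k)), hsym (v (1+k)) u, hsym (v (2+k)) u,
      hsym u (v (1+k)), hsym u (v (2+k)), hsym u (v k)]
  have total : ∀ K : ℕ, ∑ k ∈ Finset.range K,
      (v (k+2) - u) ⬝ᵥ (M1 *ᵥ (v (k+1) - v (k+2)) + M2 *ᵥ (v k - v (k+2)))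
      = (Nf (ev 1) - Nf (ev (K+1)))/2
        - (1/2) * ∑ k ∈ Finset.range K, Nf (dv (k+1))
        + m2f (dv K) (ev (K+1)) - m2f (dv 0) (ev 1)
        - ∑ k ∈ Finset.range K, m2f (dv k) (dv (k+1)) := by
    intro K
    induction K with
    | zero => simp
    | succ K ih =>
      rw [Finset.sum_range_succ, ih, pti K, Finset.sum_range_succ, Finset.sum_range_succ]
      ring
  have hkey' : ∀ a c : d → ℝ, -(c ⬝ᵥ M2 *ᵥ a) ≤ 1/4 * (a ⬝ᵥ H *ᵥ a + c ⬝ᵥ H *ᵥ c) := by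
    intro a c
    have h := hkey (-a) c
    rw [Matrix.mulVec_neg, dotProduct_neg] at h
    have hNa : (-a) ⬝ᵥ H *ᵥ (-a) = a ⬝ᵥ H *ᵥ a := by
      rw [Matrix.mulVec_neg, dotProduct_neg, neg_dotProduct, neg_neg]
    rw [hNa] at h
    exact h
  have hm2sum : - ∑ k ∈ Finset.range K, m2f (dv k) (dv (k+1))
      ≤ 1/4 * (∑ k ∈ Finset.range K, Nf (dv k) + ∑ k ∈ Finset.range K, Nf (dv (k+1))) := by
    rw [← Finset.sum_neg_distrib, ← Finset.sum_add_distrib, Finset.mul_sum]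
    exact Finset.sum_le_sum fun k _ => hkey' (dv k) (dv (k+1))
  have hshift : ∑ k ∈ Finset.range K, Nf (dv k) + Nf (dv K)
      = Nf (dv 0) + ∑ k ∈ Finset.range K, Nf (dv (k+1)) := by
    rw [← Finset.sum_range_succ, Finset.sum_range_succ']
    ring
  have h1 := hkey (dv K) (ev (K+1))
  have h2 := hkey' (dv 0) (ev 1)
  have h3 := hpos (ev (K+1))
  have h4 := hpos (dv K)
  rw [total K]
  have he1 : ev 1 = v 1 - u := rfl
  have hd0 : dv 0 = v 1 - v 0 := rfl
  rw [← he1, ← hd0]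
  have hh1 : m2f (dv K) (ev (K+1)) ≤ 1/4 * (Nf (dv K) + Nf (ev (K+1))) := h1
  have hh2 : - m2f (dv 0) (ev 1) ≤ 1/4 * (Nf (dv 0) + Nf (ev 1)) := h2
  show _ ≤ 3/4 * Nf (ev 1) + 1/2 * Nf (dv 0)
  linarith

end Aux6
/-- Real-valued version of `PhiFun` (valid when all values are finite). -/
def Phir {s m : ℕ} {n : Fin s → ℕ} (f : ∀ i : Fin s, (Fin (n i) → ℝ) → EReal)
    (b : Fin m → ℝ) (vec : FIdx n m → ℝ) : ℝ :=
  (∑ i, (f i (blk (xpart vec) i)).toReal) + (ypart vec) ⬝ᵥ b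

section Aux7

variable {s m : ℕ} {n : Fin s → ℕ}

private lemma step_ineq
    (f : ∀ i : Fin s, (Fin (n i) → ℝ) → EReal)
    (A : ∀ i : Fin s, Matrix (Fin m) (Fin (n i)) ℝ) (b : Fin m → ℝ)
    (hf : ∀ i, ProperConvexLsc (f i))
    (α : Fin s → ℝ) (hα : ∀ i, 0 < α i) (β : ℝ) (hβ : 0 < β)
    (M0 M1 M2 : Matrix (FIdx n m) (FIdx n m) ℝ) (hM0 : M0 = M1 + M2)
    (v : ℕ → FIdx n m → ℝ)
    (hrec : ∀ k : ℕ, isTM f A b α β M0 M1 M2 (v (k + 1)) (v k) (v (k + 2))) (k : ℕ)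
    (u : FIdx n m → ℝ) (hu : ∀ i, f i (blk (xpart u) i) ≠ ⊤) :
    Phir f b (v (k+2)) - Phir f b u + u ⬝ᵥ (SAmat A) *ᵥ (v (k+2))
      ≤ (v (k+2) - u) ⬝ᵥ (M1 *ᵥ (v (k+1) - v (k+2)) + M2 *ᵥ (v k - v (k+2))) := by
  set w : FIdx n m → ℝ := v (k+2) with hw
  set z : FIdx n m → ℝ := (Emat A α β - Rinv α β * M0) *ᵥ w
      + (Rinv α β * M1) *ᵥ (v (k+1)) + (Rinv α β * M2) *ᵥ (v k) with hz
  obtain ⟨hx, hy⟩ := hrec k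
  -- block inequalities
  have hi : ∀ i, 0 ≤ (β / α i) * ((blk (xpart w) i - blk (xpart z) i)
        ⬝ᵥ (blk (xpart u) i - blk (xpart w) i))
      + ((f i (blk (xpart u) i)).toReal - (f i (blk (xpart w) i)).toReal) := by
    intro i
    have h := (prox_vi (hf i) (div_pos (hα i) hβ) (hx i).1).2 _ (hu i)
    have hba : (0:ℝ) < β / α i := div_pos hβ (hα i)
    have h2 := mul_nonneg hba.le h
    rw [mul_add, ← mul_assoc] at h2
    have h3 : β / α i * (α i / β) = 1 := by
      rw [div_mul_div_comm, mul_comm (α i) β]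
      exact div_self (mul_pos hβ (hα i)).ne'
    rw [h3, one_mul] at h2
    exact h2
  -- y inequality
  have hyineq : 0 ≤ (1/β) * ((ypart w - ypart z) ⬝ᵥ (ypart u - ypart w))
      + ((ypart u ⬝ᵥ b) - (ypart w ⬝ᵥ b)) := by
    have h := (prox_vi (iota_proper b) hβ hy.1).2 (ypart u) (by simp [iotaCstar])
    simp only [iotaCstar, EReal.toReal_coe] at h
    have h2 := mul_nonneg (by positivity : (0:ℝ) ≤ 1/β) h
    rw [mul_add, ← mul_assoc] at h2
    rw [one_div, inv_mul_cancel₀ hβ.ne', one_mul] at h2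
    rw [one_div]
    exact h2
  -- sum them
  have hsum : 0 ≤ (∑ i, (β / α i) * ((blk (xpart w) i - blk (xpart z) i)
        ⬝ᵥ (blk (xpart u) i - blk (xpart w) i)))
      + (1/β) * ((ypart w - ypart z) ⬝ᵥ (ypart u - ypart w))
      + (Phir f b u - Phir f b w) := by
    have h1 : 0 ≤ ∑ i, ((β / α i) * ((blk (xpart w) i - blk (xpart z) i)
        ⬝ᵥ (blk (xpart u) i - blk (xpart w) i))
      + ((f i (blk (xpart u) i)).toReal - (f i (blk (xpart w) i)).toReal)) :=
      Finset.sum_nonneg fun i _ => hi i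
    rw [Finset.sum_add_distrib] at h1
    simp only [Phir]
    have h2 : ∑ i, ((f i (blk (xpart u) i)).toReal - (f i (blk (xpart w) i)).toReal)
        = ∑ i, (f i (blk (xpart u) i)).toReal - ∑ i, (f i (blk (xpart w) i)).toReal :=
      Finset.sum_sub_distrib _ _
    rw [h2] at h1
    linarith [hyineq]
  -- identify the pairing
  have hds := dot_split (n := n) (m := m) α β (w - z) (u - w)
  have hblk : ∀ i, blk (xpart (w - z)) i = blk (xpart w) i - blk (xpart z) i :=
    fun i => rfl
  have hypart : ypart (w - z) = ypart w - ypart z := rfl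
  have hxu : ∀ i, blk (xpart (u - w)) i = blk (xpart u) i - blk (xpart w) i :=
    fun i => rfl
  have hyu : ypart (u - w) = ypart u - ypart w := rfl
  rw [hypart, hyu] at hds
  simp only [hblk, hxu] at hds
  -- rewrite R (w - z)
  have hRz := Rz_identity A α β hα hβ M0 M1 M2 hM0 w (v (k+1)) (v k)
  have hwz : w - z = -(z - w) := (neg_sub _ _).symm
  have hRwz : Rmat (n := n) (m := m) α β *ᵥ (w - z)
      = -(SAmat A *ᵥ w + M1 *ᵥ (v (k+1) - w) + M2 *ᵥ (v k - w)) := by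
    rw [hwz, Matrix.mulVec_neg, hz, hRz]
  rw [hRwz] at hds
  have hskew := skew_zero A w
  -- final arithmetic
  rw [← hds] at hsum
  simp only [dotProduct_neg, dotProduct_add, sub_dotProduct] at hsum ⊢
  linarith

end Aux7
section Aux8

private lemma sum_shift {M : Type*} [AddCommMonoid M] (g : ℕ → M) (K : ℕ) :
    ∑ k ∈ Finset.Icc 2 (K+1), g k = ∑ k ∈ Finset.range K, g (k+2) := by
  induction K with
  | zero =>
    rw [show Finset.Icc 2 1 = (∅ : Finset ℕ) from by ext x; simp [Finset.mem_Icc]]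
    simp
  | succ K ih =>
    have h : Finset.Icc 2 (K+1+1) = insert (K+2) (Finset.Icc 2 (K+1)) := by
      ext x; simp only [Finset.mem_Icc, Finset.mem_insert]; omega
    rw [h, Finset.sum_insert (by simp [Finset.mem_Icc]), Finset.sum_range_succ, ih]
    exact add_comm _ _

private lemma sum_ne_bot {ι : Type*} (s : Finset ι) (g : ι → EReal)
    (h : ∀ j ∈ s, g j ≠ ⊥) : ∑ j ∈ s, g j ≠ ⊥ := by
  induction s using Finset.cons_induction with
  | empty => simp
  | cons a t ha ih =>
    rw [Finset.sum_cons]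
    simp only [ne_eq, EReal.add_eq_bot_iff, not_or]
    exact ⟨h a (Finset.mem_cons_self a t), ih fun j hj => h j (Finset.mem_cons_of_mem hj)⟩

private lemma sum_top {ι : Type*} [DecidableEq ι] (s : Finset ι) (g : ι → EReal)
    (hbot : ∀ j ∈ s, g j ≠ ⊥) {j0 : ι} (hj0 : j0 ∈ s) (htop : g j0 = ⊤) :
    ∑ j ∈ s, g j = ⊤ := by
  rw [← Finset.add_sum_erase _ _ hj0, htop]
  exact EReal.top_add_of_ne_bot
    (sum_ne_bot _ _ fun j hj => hbot j (Finset.mem_of_mem_erase hj))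

end Aux8
section Aux9

private lemma dotProduct_finsum {ι κ : Type*} [Fintype κ] (s : Finset ι)
    (x : κ → ℝ) (g : ι → κ → ℝ) :
    x ⬝ᵥ (∑ k ∈ s, g k) = ∑ k ∈ s, x ⬝ᵥ g k := by
  simp only [dotProduct, Finset.sum_apply, Finset.mul_sum]
  exact Finset.sum_comm

private lemma finsum_dotProduct {ι κ : Type*} [Fintype κ] (s : Finset ι)
    (x : κ → ℝ) (g : ι → κ → ℝ) :
    (∑ k ∈ s, g k) ⬝ᵥ x = ∑ k ∈ s, g k ⬝ᵥ x := by
  simp only [dotProduct, Finset.sum_apply, Finset.sum_mul]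
  exact Finset.sum_comm

private lemma mulVec_finsum {ι κ κ' : Type*} [Fintype κ] [Fintype κ'] (s : Finset ι)
    (M : Matrix κ' κ ℝ) (g : ι → κ → ℝ) :
    M *ᵥ (∑ k ∈ s, g k) = ∑ k ∈ s, M *ᵥ g k := by
  simpa only [Matrix.mulVecLin_apply] using map_sum (Matrix.mulVecLin M) g s

end Aux9

theorem scheme_averaged_G_bound' {s m : ℕ} {n : Fin s → ℕ}
    (f : ∀ i : Fin s, (Fin (n i) → ℝ) → EReal)
    (A : ∀ i : Fin s, Matrix (Fin m) (Fin (n i)) ℝ) (b : Fin m → ℝ)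
    (hf : ∀ i, ProperConvexLsc (f i))
    (α : Fin s → ℝ) (hα : ∀ i, 0 < α i) (β : ℝ) (hβ : 0 < β)
    (M0 M1 M2 : Matrix (FIdx n m) (FIdx n m) ℝ)
    (hwd : TMWellDefined f A b α β M0 M1 M2)
    (hM : ConditionM M0 M1 M2)
    (v : ℕ → FIdx n m → ℝ)
    (hrec : ∀ k : ℕ, isTM f A b α β M0 M1 M2 (v (k + 1)) (v k) (v (k + 2))) :
    ∀ (K : ℕ), 1 ≤ K → ∀ w : FIdx n m → ℝ,
      Gfun f A b ((1 / (K : ℝ)) • ∑ k ∈ Finset.Icc 2 (K + 1), v k) w ≤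
        ((((3 : ℝ) / 4 * ((v 1 - w) ⬝ᵥ (M0 + M2).mulVec (v 1 - w)) +
           (1 : ℝ) / 2 * ((v 1 - v 0) ⬝ᵥ (M0 + M2).mulVec (v 1 - v 0))) / (K : ℝ) : ℝ) :
          EReal) := by
  obtain ⟨hM0, hH, hspec⟩ := hM
  have hkey := key_bound hH hspec
  have hHsym : (M0 + M2)ᵀ = M0 + M2 := by
    have h := hH.1
    rwa [Matrix.IsHermitian, Matrix.conjTranspose_eq_transpose_of_trivial] at h
  have hpos : ∀ a : FIdx n m → ℝ, 0 ≤ a ⬝ᵥ (M0 + M2) *ᵥ a := by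
    intro a
    have h := hH.posSemidef.dotProduct_mulVec_nonneg a
    simpa using h
  have hM1 : M1 = (M0 + M2) - M2 - M2 := by
    rw [hM0]; abel
  have hbots : ∀ i x, f i x ≠ ⊥ := fun i => (hf i).2.1
  have hwfin : ∀ k i, f i (blk (xpart (v (k+2))) i) ≠ ⊤ := fun k i =>
    (prox_vi (hf i) (div_pos (hα i) hβ) (((hrec k).1) i).1).1
  intro K hK w
  have hKpos : (0:ℝ) < (K:ℝ) := by exact_mod_cast Nat.pos_of_ne_zero (by omega)
  set vbar : FIdx n m → ℝ := (1 / (K:ℝ)) • ∑ k ∈ Finset.Icc 2 (K+1), v k with hvbar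
  rw [Gfun]
  by_cases hut : ∀ i, f i (blk (xpart w) i) ≠ ⊤
  case neg =>
    push_neg at hut
    obtain ⟨i0, hi0⟩ := hut
    have htop : objSum f (xpart w) = ⊤ :=
      sum_top _ _ (fun j _ => hbots j _) (Finset.mem_univ i0) hi0
    have hPw : PhiFun f b w = ⊤ := by
      rw [PhiFun, htop, show iotaCstar b (ypart w) = ((ypart w ⬝ᵥ b : ℝ) : EReal) from rfl,
        EReal.top_add_coe]
    rw [hPw, EReal.sub_top, EReal.bot_add]
    exact bot_le
  case pos =>
    have hcard : (Finset.Icc 2 (K+1)).card = K := by rw [Nat.card_Icc]; omega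
    have hne : (Finset.Icc 2 (K+1)).Nonempty := ⟨2, by simp [Finset.mem_Icc]; omega⟩
    -- ===== EReal bound on PhiFun vbar =====
    have hxbar : ∀ i, blk (xpart vbar) i
        = ((K : ℝ))⁻¹
          • ∑ k ∈ Finset.Icc 2 (K+1), blk (xpart (v k)) i := by
      intro i; funext j
      simp [hvbar, blk, xpart, Finset.sum_apply, hcard, one_div]
    have hjen : ∀ i, f i (blk (xpart vbar) i)
        ≤ ((((K:ℝ))⁻¹ * ∑ k ∈ Finset.Icc 2 (K+1),
            (f i (blk (xpart (v k)) i)).toReal : ℝ) : EReal) := by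
      intro i
      have hfin : ∀ k ∈ Finset.Icc 2 (K+1), f i (blk (xpart (v k)) i) ≠ ⊤ := by
        intro k hk
        rw [Finset.mem_Icc] at hk
        obtain ⟨k', rfl⟩ : ∃ k', k = k' + 2 := ⟨k - 2, by omega⟩
        exact hwfin k' i
      have h := jensen_finset (hf i) (Finset.Icc 2 (K+1)) hne
        (fun k => blk (xpart (v k)) i) hfin
      rw [hxbar i]
      rw [hcard] at h
      exact h
    have hobj : objSum f (xpart vbar)
        ≤ ((∑ i, ((K:ℝ))⁻¹ * ∑ k ∈ Finset.Icc 2 (K+1),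
            (f i (blk (xpart (v k)) i)).toReal : ℝ) : EReal) := by
      rw [objSum, ecoe_sum]
      exact Finset.sum_le_sum fun i _ => hjen i
    have hyv : ypart vbar = ((K:ℝ))⁻¹ • ∑ k ∈ Finset.Icc 2 (K+1), ypart (v k) := by
      funext r
      simp [hvbar, ypart, Finset.sum_apply, one_div]
    have hybar : ypart vbar ⬝ᵥ b
        = ((K:ℝ))⁻¹ * ∑ k ∈ Finset.Icc 2 (K+1), (ypart (v k) ⬝ᵥ b) := by
      rw [hyv, smul_dotProduct, finsum_dotProduct, smul_eq_mul]
    have hPhibar : PhiFun f b vbar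
        ≤ (((∑ i, ((K:ℝ))⁻¹ * ∑ k ∈ Finset.Icc 2 (K+1),
            (f i (blk (xpart (v k)) i)).toReal)
          + ((K:ℝ))⁻¹ * ∑ k ∈ Finset.Icc 2 (K+1), (ypart (v k) ⬝ᵥ b) : ℝ) : EReal) := by
      rw [PhiFun, EReal.coe_add]
      refine add_le_add hobj (le_of_eq ?_)
      rw [show iotaCstar b (ypart vbar) = ((ypart vbar ⬝ᵥ b : ℝ) : EReal) from rfl, hybar]
    -- ===== PhiFun w is real =====
    have hPhiw : PhiFun f b w = ((Phir f b w : ℝ) : EReal) := by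
      rw [PhiFun, Phir, EReal.coe_add, objSum, ecoe_sum]
      congr 1
      exact Finset.sum_congr rfl fun i _ => (EReal.coe_toReal (hut i) (hbots i _)).symm
    -- ===== SA term =====
    have hsa : w ⬝ᵥ (SAmat A) *ᵥ vbar
        = ((K:ℝ))⁻¹ * ∑ k ∈ Finset.Icc 2 (K+1), w ⬝ᵥ (SAmat A) *ᵥ (v k) := by
      rw [hvbar, Matrix.mulVec_smul, dotProduct_smul, mulVec_finsum, dotProduct_finsum,
        smul_eq_mul, one_div]
    -- ===== the summed real inequality =====
    have hsumineq : ∑ k ∈ Finset.range K,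
        (Phir f b (v (k+2)) - Phir f b w + w ⬝ᵥ (SAmat A) *ᵥ (v (k+2)))
        ≤ 3/4 * ((v 1 - w) ⬝ᵥ (M0 + M2) *ᵥ (v 1 - w))
          + 1/2 * ((v 1 - v 0) ⬝ᵥ (M0 + M2) *ᵥ (v 1 - v 0)) := by
      refine le_trans (Finset.sum_le_sum fun k _ =>
        step_ineq f A b hf α hα β hβ M0 M1 M2 hM0 v hrec k w hut) ?_
      exact telescope_bound (M0 + M2) M1 M2 hM1 hHsym hpos hkey v w K
    have hshift : ∑ k ∈ Finset.Icc 2 (K+1),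
        (Phir f b (v k) - Phir f b w + w ⬝ᵥ (SAmat A) *ᵥ (v k))
        = ∑ k ∈ Finset.range K,
        (Phir f b (v (k+2)) - Phir f b w + w ⬝ᵥ (SAmat A) *ᵥ (v (k+2))) :=
      sum_shift _ K
    have hexp : ∑ k ∈ Finset.Icc 2 (K+1),
        (Phir f b (v k) - Phir f b w + w ⬝ᵥ (SAmat A) *ᵥ (v k))
        = (∑ k ∈ Finset.Icc 2 (K+1), Phir f b (v k)) - K * Phir f b w
          + ∑ k ∈ Finset.Icc 2 (K+1), w ⬝ᵥ (SAmat A) *ᵥ (v k) := by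
      rw [Finset.sum_add_distrib, Finset.sum_sub_distrib, Finset.sum_const, hcard,
        nsmul_eq_mul]
    -- ===== real algebra =====
    have hswap : ∑ i, ((K:ℝ))⁻¹ * ∑ k ∈ Finset.Icc 2 (K+1),
          (f i (blk (xpart (v k)) i)).toReal
        = ((K:ℝ))⁻¹ * ∑ k ∈ Finset.Icc 2 (K+1), ∑ i,
          (f i (blk (xpart (v k)) i)).toReal := by
      rw [← Finset.mul_sum]
      congr 1
      exact Finset.sum_comm
    have hPhir_sum : ∑ k ∈ Finset.Icc 2 (K+1), Phir f b (v k)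
        = (∑ k ∈ Finset.Icc 2 (K+1), ∑ i, (f i (blk (xpart (v k)) i)).toReal)
          + ∑ k ∈ Finset.Icc 2 (K+1), (ypart (v k) ⬝ᵥ b) := by
      rw [← Finset.sum_add_distrib]
      exact Finset.sum_congr rfl fun k _ => rfl
    have hreal : (∑ i, ((K:ℝ))⁻¹ * ∑ k ∈ Finset.Icc 2 (K+1),
          (f i (blk (xpart (v k)) i)).toReal)
          + ((K:ℝ))⁻¹ * ∑ k ∈ Finset.Icc 2 (K+1), (ypart (v k) ⬝ᵥ b)
          - Phir f b w
          + ((K:ℝ))⁻¹ * ∑ k ∈ Finset.Icc 2 (K+1), w ⬝ᵥ (SAmat A) *ᵥ (v k)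
        ≤ (3/4 * ((v 1 - w) ⬝ᵥ (M0 + M2) *ᵥ (v 1 - w))
          + 1/2 * ((v 1 - v 0) ⬝ᵥ (M0 + M2) *ᵥ (v 1 - v 0))) / (K:ℝ) := by
      rw [hswap, le_div_iff₀ hKpos]
      have hKne : (K:ℝ) ≠ 0 := hKpos.ne'
      have hid : (((K:ℝ))⁻¹ * ∑ k ∈ Finset.Icc 2 (K+1), ∑ i,
            (f i (blk (xpart (v k)) i)).toReal
          + ((K:ℝ))⁻¹ * ∑ k ∈ Finset.Icc 2 (K+1), (ypart (v k) ⬝ᵥ b)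
          - Phir f b w
          + ((K:ℝ))⁻¹ * ∑ k ∈ Finset.Icc 2 (K+1), w ⬝ᵥ (SAmat A) *ᵥ (v k)) * (K:ℝ)
          = (∑ k ∈ Finset.Icc 2 (K+1), Phir f b (v k)) - (K:ℝ) * Phir f b w
            + ∑ k ∈ Finset.Icc 2 (K+1), w ⬝ᵥ (SAmat A) *ᵥ (v k) := by
        rw [hPhir_sum]
        field_simp
      rw [hid, ← hexp, hshift]
      exact hsumineq
    -- ===== final EReal chain =====
    calc PhiFun f b vbar - PhiFun f b w + ((w ⬝ᵥ (SAmat A) *ᵥ vbar : ℝ) : EReal)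
        ≤ (((∑ i, ((K:ℝ))⁻¹ * ∑ k ∈ Finset.Icc 2 (K+1),
              (f i (blk (xpart (v k)) i)).toReal)
            + ((K:ℝ))⁻¹ * ∑ k ∈ Finset.Icc 2 (K+1), (ypart (v k) ⬝ᵥ b) : ℝ) : EReal)
            - ((Phir f b w : ℝ) : EReal)
            + ((((K:ℝ))⁻¹ * ∑ k ∈ Finset.Icc 2 (K+1),
              w ⬝ᵥ (SAmat A) *ᵥ (v k) : ℝ) : EReal) := by
          rw [hPhiw, hsa]
          exact add_le_add_left (EReal.sub_le_sub hPhibar le_rfl) _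
      _ = (((∑ i, ((K:ℝ))⁻¹ * ∑ k ∈ Finset.Icc 2 (K+1),
              (f i (blk (xpart (v k)) i)).toReal)
            + ((K:ℝ))⁻¹ * ∑ k ∈ Finset.Icc 2 (K+1), (ypart (v k) ⬝ᵥ b)
            - Phir f b w
            + ((K:ℝ))⁻¹ * ∑ k ∈ Finset.Icc 2 (K+1),
              w ⬝ᵥ (SAmat A) *ᵥ (v k) : ℝ) : EReal) := by
          norm_cast
      _ ≤ _ := by
          rw [EReal.coe_le_coe_iff]
          exact hreal

/-- under Condition-M, with `H := M₀ + M₂` and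
`v̄_K := (1/K)∑_{k=2}^{K+1} v^k`, for every `K ≥ 1` and every `v`:
`G(v̄_K, v) ≤ ((3/4)‖v¹ − v‖_H² + (1/2)‖v¹ − v⁰‖_H²)/K`. -/
theorem scheme_averaged_G_bound {s m : ℕ} {n : Fin s → ℕ}
    (f : ∀ i : Fin s, (Fin (n i) → ℝ) → EReal)
    (A : ∀ i : Fin s, Matrix (Fin m) (Fin (n i)) ℝ) (b : Fin m → ℝ)
    (hf : ∀ i, ProperConvexLsc (f i))
    (α : Fin s → ℝ) (hα : ∀ i, 0 < α i) (β : ℝ) (hβ : 0 < β)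
    (M0 M1 M2 : Matrix (FIdx n m) (FIdx n m) ℝ)
    (hwd : TMWellDefined f A b α β M0 M1 M2)
    (hM : ConditionM M0 M1 M2)
    (v : ℕ → FIdx n m → ℝ)
    (hrec : ∀ k : ℕ, isTM f A b α β M0 M1 M2 (v (k + 1)) (v k) (v (k + 2))) :
    ∀ (K : ℕ), 1 ≤ K → ∀ w : FIdx n m → ℝ,
      Gfun f A b ((1 / (K : ℝ)) • ∑ k ∈ Finset.Icc 2 (K + 1), v k) w ≤
        ((((3 : ℝ) / 4 * ((v 1 - w) ⬝ᵥ (M0 + M2).mulVec (v 1 - w)) +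
           (1 : ℝ) / 2 * ((v 1 - v 0) ⬝ᵥ (M0 + M2).mulVec (v 1 - v 0))) / (K : ℝ) : ℝ) :
          EReal) := by
  exact scheme_averaged_G_bound' f A b hf α hα β hβ M0 M1 M2 hwd hM v hrec

end
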